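/- Let m ≥ 2 be even, n = 3m, K = 3, Δ > 0 and γ₊ > γ₋ > 0 with m·Δ² < 2·(γ₊ − γ₋). Let 𝒢 = {G₁, G₂, G₃} be the partition of {1,…,n} into three consecutive blocks of size m, with characteristic matrix B*. Set Λ := (Δ²·m/2)·B* (which is the Gram matrix of means when μ₁, μ₂, μ₃ are pairwise orthogonal of norm Δ/√2, so that ρ(𝒢,μ,0) = +∞ and Δ(μ) = Δ), and let Γ be the diagonal matrix with Γ_{aa} = γ₊ for a ∈ G₁ and Γ_{aa} = γ₋ otherwise, so |Γ|_V = γ₊ − γ₋. Let B₁ be the characteristic matrix of the partition of {1,…,n} that splits G₁ into two halves of size m/2 and merges G₂ ∪ G₃ into one group of size 2m. Then B₁ ∈ C_K^{0,1} and ⟨Λ + Γ, B₁⟩ > ⟨Λ + Γ, B*⟩; in particular B* is not a maximizer of ⟨Λ + Γ, B⟩ over C_K^{0,1}, nor over C_K. -/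

import Mathlib

open MeasureTheory ProbabilityTheory Matrix Real

noncomputable section

namespace Clustering

/-- Euclidean norm of a (finitely indexed) real vector. -/
def vnorm {ι : Type*} [Fintype ι] (v : ι → ℝ) : ℝ := Real.sqrt (∑ i, v i ^ 2)

/-- Euclidean inner product. -/
def vdot {ι : Type*} [Fintype ι] (u v : ι → ℝ) : ℝ := ∑ i, u i * v i

/-- Frobenius norm of a matrix. -/
def frobNorm {ι κ : Type*} [Fintype ι] [Fintype κ] (M : Matrix ι κ ℝ) : ℝ :=
  Real.sqrt (∑ i, ∑ j, M i j ^ 2)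

/-- Operator (`ℓ₂ → ℓ₂` spectral) norm of a matrix. -/
def opNorm {ι κ : Type*} [Fintype ι] [Fintype κ] (M : Matrix ι κ ℝ) : ℝ :=
  sSup {r | ∃ x : κ → ℝ, vnorm x ≤ 1 ∧ r = vnorm (M.mulVec x)}

/-- Nuclear norm: the sum of the singular values, i.e. of the square roots of the
eigenvalues of `Mᴴ * M`. -/
def nuclearNorm {ι : Type*} [Fintype ι] [DecidableEq ι] (M : Matrix ι ι ℝ) : ℝ :=
  ∑ i, Real.sqrt ((show (Mᵀ * M).IsHermitian by
    simpa using Matrix.isHermitian_conjTranspose_mul_self M).eigenvalues i)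

/-- Entrywise supremum norm. -/
def infNorm {ι κ : Type*} [Fintype ι] [Fintype κ] (M : Matrix ι κ ℝ) : ℝ :=
  ⨆ i, ⨆ j, |M i j|

/-- Variation semi-norm of (the diagonal of) a matrix: the difference between the largest
and the smallest diagonal entry. -/
def varSeminorm {ι : Type*} [Fintype ι] (M : Matrix ι ι ℝ) : ℝ :=
  (⨆ i, M i i) - ⨅ i, M i i

/-- Frobenius (entrywise) inner product of two square matrices. -/
def mip {ι : Type*} [Fintype ι] (A B : Matrix ι ι ℝ) : ℝ := ∑ a, ∑ b, A a b * B a b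

/-- `G` is a partition of `{1,…,n}` into `K` (nonempty) groups. -/
def IsPartition {n K : ℕ} (G : Fin K → Finset (Fin n)) : Prop :=
  (∀ a : Fin n, ∃! k, a ∈ G k) ∧ ∀ k, (G k).Nonempty

/-- Characteristic matrix `B*` of a partition. -/
def charMatrix {n K : ℕ} (G : Fin K → Finset (Fin n)) : Matrix (Fin n) (Fin n) ℝ :=
  fun a b => ∑ k, if a ∈ G k ∧ b ∈ G k then ((G k).card : ℝ)⁻¹ else 0

/-- Minimal cluster size `m`. -/
def minCard {n K : ℕ} (G : Fin K → Finset (Fin n)) : ℕ := sInf {m | ∃ k, m = (G k).card}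

/-- `|B_{G_k G_l}|₁`, the entrywise `ℓ¹`-norm of block `(k,l)` of `B`. -/
def blockL1 {n K : ℕ} (G : Fin K → Finset (Fin n)) (k l : Fin K)
    (B : Matrix (Fin n) (Fin n) ℝ) : ℝ :=
  ∑ a ∈ G k, ∑ b ∈ G l, |B a b|

/-- `∑_{1 ≤ k ≠ l ≤ K} |B_{G_k G_l}|₁`. -/
def offDiagSum {n K : ℕ} (G : Fin K → Finset (Fin n)) (B : Matrix (Fin n) (Fin n) ℝ) : ℝ :=
  ∑ k, ∑ l, if k = l then 0 else blockL1 G k l B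

/-- The (population) means `ν` are `(𝒢, μ, δ)`-clustered. -/
def IsClustered {n p K : ℕ} (ν : Fin n → Fin p → ℝ) (G : Fin K → Finset (Fin n))
    (μcl : Fin K → Fin p → ℝ) (δ : ℝ) : Prop :=
  IsPartition G ∧ 0 ≤ δ ∧ ∀ k, ∀ a ∈ G k, vnorm (fun i => ν a i - μcl k i) ≤ δ

/-- Separation `Δ(μ) = min_{k ≠ l} |μ_k - μ_l|₂` between the cluster means. -/
def Delta {p K : ℕ} (μcl : Fin K → Fin p → ℝ) : ℝ :=
  sInf {r | ∃ k l : Fin K, k ≠ l ∧ r = vnorm (fun i => μcl k i - μcl l i)}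

variable {Ω : Type*} [MeasurableSpace Ω]

/-- Mean (expectation) of a random vector, componentwise. -/
def mean {ι : Type*} [Fintype ι] (P : Measure Ω) (X : Ω → ι → ℝ) : ι → ℝ :=
  fun i => ∫ ω, X ω i ∂P

/-- `Y ~ subg(S)`: `Y` is subgaussian with variance-bounding matrix `S`. -/
def IsSubg {ι : Type*} [Fintype ι] (P : Measure Ω) (Y : Ω → ι → ℝ)
    (S : Matrix ι ι ℝ) : Prop :=
  ∀ x : ι → ℝ,
    ∫ ω, Real.exp (vdot x fun i => Y ω i - mean P Y i) ∂P ≤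
      Real.exp (vdot x (S.mulVec x) / 2)

/-- Observed Gram matrix `Λ̂`. -/
def gramHat {n p : ℕ} (X : Fin n → Ω → Fin p → ℝ) (ω : Ω) : Matrix (Fin n) (Fin n) ℝ :=
  fun a b => vdot (X a ω) (X b ω)

/-- Noise `E_a = X_a - ν_a`. -/
def noiseE {n p : ℕ} (P : Measure Ω) (X : Fin n → Ω → Fin p → ℝ) (a : Fin n) (ω : Ω) :
    Fin p → ℝ := fun i => X a ω i - mean P (X a) i

/-- `Γ = Diag(E[|X_a − ν_a|₂²])ₐ`. -/
def gammaMat {n p : ℕ} (P : Measure Ω) (X : Fin n → Ω → Fin p → ℝ) :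
    Matrix (Fin n) (Fin n) ℝ :=
  Matrix.diagonal fun a => ∫ ω, vnorm (noiseE P X a ω) ^ 2 ∂P

/-- `(W₄)_{ab} = ⟨E_a, E_b⟩ − Γ_{ab}`. -/
def W4mat {n p : ℕ} (P : Measure Ω) (X : Fin n → Ω → Fin p → ℝ) (ω : Ω) :
    Matrix (Fin n) (Fin n) ℝ :=
  fun a b => vdot (noiseE P X a ω) (noiseE P X b ω) - gammaMat P X a b

/-- `σ² := maxₐ |Σ_a|_op`. -/
def sigma2 {n p : ℕ} (Sg : Fin n → Matrix (Fin p) (Fin p) ℝ) : ℝ := ⨆ a, opNorm (Sg a)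

/-- `𝒱² := maxₐ |Σ_a|_F`. -/
def Vfrob2 {n p : ℕ} (Sg : Fin n → Matrix (Fin p) (Fin p) ℝ) : ℝ := ⨆ a, frobNorm (Sg a)

/-- `γ² := maxₐ |Σ_a|_*`. -/
def gamma2 {n p : ℕ} (Sg : Fin n → Matrix (Fin p) (Fin p) ℝ) : ℝ := ⨆ a, nuclearNorm (Sg a)

/-- `σ_k² := max_{a ∈ G_k} |Σ_a|_op`. -/
def sigma2On {n p K : ℕ} (Sg : Fin n → Matrix (Fin p) (Fin p) ℝ)
    (G : Fin K → Finset (Fin n)) (k : Fin K) : ℝ :=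
  ⨆ a : {a // a ∈ G k}, opNorm (Sg a.1)

/-- `V(a,b) = max_{(c,d) ∈ ([n]∖{a,b})²} |⟨X_a − X_b, (X_c − X_d)/|X_c − X_d|₂⟩|`. -/
def Vstat {n p : ℕ} (X : Fin n → Ω → Fin p → ℝ) (ω : Ω) (a b : Fin n) : ℝ :=
  ⨆ c : Fin n, ⨆ d : Fin n,
    if c ≠ a ∧ c ≠ b ∧ d ≠ a ∧ d ≠ b then
      |vdot (fun i => X a ω i - X b ω i)
          (fun i => (X c ω i - X d ω i) / vnorm (fun j => X c ω j - X d ω j))|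
    else 0

/-- A minimizer of `f` over the finite set `s`. -/
def argminOn {n : ℕ} [NeZero n] (s : Finset (Fin n)) (f : Fin n → ℝ) : Fin n :=
  if h : s.Nonempty then (Finset.exists_min_image s f h).choose else 0

/-- `b₁ = argmin_{b ≠ a} V(a,b)`. -/
def bOne {n p : ℕ} [NeZero n] (X : Fin n → Ω → Fin p → ℝ) (ω : Ω) (a : Fin n) : Fin n :=
  argminOn (Finset.univ.erase a) fun b => Vstat X ω a b

/-- `b₂ = argmin_{b ∉ {a, b₁}} V(a,b)`. -/
def bTwo {n p : ℕ} [NeZero n] (X : Fin n → Ω → Fin p → ℝ) (ω : Ω) (a : Fin n) : Fin n :=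
  argminOn ((Finset.univ.erase a).erase (bOne X ω a)) fun b => Vstat X ω a b

/-- The corrected estimator `Γ̂^corr = Diag(⟨X_a − X_{b₁}, X_a − X_{b₂}⟩)ₐ`. -/
def gammaCorr {n p : ℕ} [NeZero n] (X : Fin n → Ω → Fin p → ℝ) (ω : Ω) :
    Matrix (Fin n) (Fin n) ℝ :=
  Matrix.diagonal fun a =>
    vdot (fun i => X a ω i - X (bOne X ω a) ω i) fun i => X a ω i - X (bTwo X ω a) ω i

/-- `C_K^{0,1}`. -/
def CK01 (n K : ℕ) : Set (Matrix (Fin n) (Fin n) ℝ) :=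
  {B | (∀ a b, 0 ≤ B a b) ∧ B.IsSymm ∧ B.trace = (K : ℝ) ∧
    (B.mulVec fun _ => 1) = (fun _ => 1) ∧ B * B = B}

/-- `C_K`. -/
def CKset (n K : ℕ) : Set (Matrix (Fin n) (Fin n) ℝ) :=
  {B | (∀ a b, 0 ≤ B a b) ∧ B.IsSymm ∧ B.trace = (K : ℝ) ∧
    (B.mulVec fun _ => 1) = (fun _ => 1) ∧ B.PosSemidef}

/-- `C = ⋃_K C_K`. -/
def Cset (n : ℕ) : Set (Matrix (Fin n) (Fin n) ℝ) := ⋃ K : ℕ, CKset n K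

/-- `B₀` is the unique maximizer of `B ↦ ⟨M, B⟩` over `S`. -/
def UniqueMaxOn {n : ℕ} (M : Matrix (Fin n) (Fin n) ℝ)
    (S : Set (Matrix (Fin n) (Fin n) ℝ)) (B0 : Matrix (Fin n) (Fin n) ℝ) : Prop :=
  B0 ∈ S ∧ ∀ B ∈ S, B ≠ B0 → mip M B < mip M B0

/-- `B₀` is the unique maximizer of the `κ`-penalized objective `B ↦ ⟨M, B⟩ − κ·tr B` over `S`. -/
def UniqueMaxPen {n : ℕ} (M : Matrix (Fin n) (Fin n) ℝ) (κ : ℝ)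
    (S : Set (Matrix (Fin n) (Fin n) ℝ)) (B0 : Matrix (Fin n) (Fin n) ℝ) : Prop :=
  B0 ∈ S ∧ ∀ B ∈ S, B ≠ B0 → mip M B - κ * B.trace < mip M B0 - κ * B0.trace


/-- Population Gram matrix `Λ = (⟨ν_a, ν_b⟩)_{a,b}`. -/
def gramMean {n p : ℕ} (P : Measure Ω) (X : Fin n → Ω → Fin p → ℝ) :
    Matrix (Fin n) (Fin n) ℝ :=
  fun a b => vdot (mean P (X a)) (mean P (X b))

/-- The partition of `{1,…,3m}` into three consecutive blocks of size `m`. -/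
def blockPartition (m : ℕ) : Fin 3 → Finset (Fin (3 * m)) :=
  fun k => Finset.univ.filter fun a => a.val / m = k.val

/-- The partition of `{1,…,3m}` splitting the first block into two halves and merging the
last two blocks. -/
def splitPartition (m : ℕ) : Fin 3 → Finset (Fin (3 * m)) :=
  fun k => Finset.univ.filter fun a =>
    (k = 0 ∧ a.val < m / 2) ∨ (k = 1 ∧ m / 2 ≤ a.val ∧ a.val < m) ∨ (k = 2 ∧ m ≤ a.val)

/-- The population objective matrix `Λ + Γ` of the counterexample. -/
def cexObjective (m : ℕ) (Δ γp γm : ℝ) : Matrix (Fin (3 * m)) (Fin (3 * m)) ℝ :=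
  (Δ ^ 2 * m / 2) • charMatrix (blockPartition m) +
    Matrix.diagonal fun a => if a.val < m then γp else γm


section CexAux

lemma cm_nonneg {n K : ℕ} (G : Fin K → Finset (Fin n)) (a b : Fin n) :
    0 ≤ charMatrix G a b := by
  apply Finset.sum_nonneg
  intro k _
  split
  · positivity
  · exact le_rfl

lemma cm_isSymm {n K : ℕ} (G : Fin K → Finset (Fin n)) : (charMatrix G).IsSymm := by
  ext a b
  simp only [Matrix.transpose_apply, charMatrix]
  exact Finset.sum_congr rfl fun k _ => if_congr and_comm rfl rfl

lemma partition_unique {n K : ℕ} {G : Fin K → Finset (Fin n)} (hG : IsPartition G)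
    {c : Fin n} {k l : Fin K} (hk : c ∈ G k) (hl : c ∈ G l) : k = l := by
  obtain ⟨k0, _, hu⟩ := hG.1 c
  rw [hu k hk, hu l hl]

lemma sum_indicator_eq_one {n K : ℕ} {G : Fin K → Finset (Fin n)} (hG : IsPartition G)
    (a : Fin n) : ∑ k, (if a ∈ G k then (1:ℝ) else 0) = 1 := by
  obtain ⟨k0, hk0, hu⟩ := hG.1 a
  rw [Finset.sum_eq_single k0]
  · simp [hk0]
  · intro k _ hk
    simp only [ite_eq_right_iff]
    intro hak
    exact absurd (hu k hak) hk
  · simp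

lemma sum_ind_card {n : ℕ} (s : Finset (Fin n)) (x : ℝ) :
    ∑ a : Fin n, (if a ∈ s then x else 0) = (s.card : ℝ) * x := by
  rw [Finset.sum_ite_mem, Finset.univ_inter, Finset.sum_const, nsmul_eq_mul]

lemma cm_trace {n K : ℕ} {G : Fin K → Finset (Fin n)} (hG : IsPartition G) :
    (charMatrix G).trace = (K : ℝ) := by
  have htr : (charMatrix G).trace = ∑ a : Fin n, charMatrix G a a := rfl
  rw [htr]
  unfold charMatrix
  rw [Finset.sum_comm]
  have h : ∀ k : Fin K,
      ∑ a : Fin n, (if a ∈ G k ∧ a ∈ G k then ((G k).card : ℝ)⁻¹ else 0) = 1 := by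
    intro k
    simp only [and_self]
    rw [sum_ind_card, mul_inv_cancel₀ (by exact_mod_cast (hG.2 k).card_pos.ne')]
  rw [Finset.sum_congr rfl fun k _ => h k, Finset.sum_const, Finset.card_univ,
    Fintype.card_fin, nsmul_eq_mul, mul_one]

lemma cm_mulVec_one {n K : ℕ} {G : Fin K → Finset (Fin n)} (hG : IsPartition G) :
    ((charMatrix G).mulVec fun _ => 1) = fun _ => 1 := by
  funext a
  have hmv : (charMatrix G).mulVec (fun _ => 1) a
      = ∑ b : Fin n, charMatrix G a b * 1 := rfl
  rw [hmv]
  simp only [mul_one]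
  unfold charMatrix
  rw [Finset.sum_comm]
  have h : ∀ k, ∑ b : Fin n, (if a ∈ G k ∧ b ∈ G k then ((G k).card : ℝ)⁻¹ else 0)
      = if a ∈ G k then (1:ℝ) else 0 := by
    intro k
    by_cases ha : a ∈ G k
    · simp only [ha, true_and, if_true]
      rw [sum_ind_card, mul_inv_cancel₀ (by exact_mod_cast (hG.2 k).card_pos.ne')]
    · simp [ha]
  rw [Finset.sum_congr rfl fun k _ => h k, sum_indicator_eq_one hG a]

lemma cm_mul_self {n K : ℕ} {G : Fin K → Finset (Fin n)} (hG : IsPartition G) :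
    charMatrix G * charMatrix G = charMatrix G := by
  ext a b
  rw [Matrix.mul_apply]
  unfold charMatrix
  have step1 : ∀ c : Fin n,
      (∑ k, if a ∈ G k ∧ c ∈ G k then ((G k).card : ℝ)⁻¹ else 0) *
        (∑ l, if c ∈ G l ∧ b ∈ G l then ((G l).card : ℝ)⁻¹ else 0)
      = ∑ k, ∑ l, (if a ∈ G k ∧ c ∈ G k then ((G k).card : ℝ)⁻¹ else 0) *
          (if c ∈ G l ∧ b ∈ G l then ((G l).card : ℝ)⁻¹ else 0) :=
    fun c => Finset.sum_mul_sum _ _ _ _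
  rw [Finset.sum_congr rfl fun c _ => step1 c, Finset.sum_comm]
  refine Finset.sum_congr rfl fun k _ => ?_
  rw [Finset.sum_comm]
  have hoff : ∀ l ∈ (Finset.univ : Finset (Fin K)), l ≠ k →
      (∑ c : Fin n, (if a ∈ G k ∧ c ∈ G k then ((G k).card : ℝ)⁻¹ else 0) *
        (if c ∈ G l ∧ b ∈ G l then ((G l).card : ℝ)⁻¹ else 0)) = 0 := by
    intro l _ hlk
    refine Finset.sum_eq_zero fun c _ => ?_
    by_cases h1 : a ∈ G k ∧ c ∈ G k
    · by_cases h2 : c ∈ G l ∧ b ∈ G l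
      · exact absurd (partition_unique hG h2.1 h1.2) hlk
      · simp [h2]
    · simp [h1]
  rw [Finset.sum_eq_single_of_mem k (Finset.mem_univ k) hoff]
  by_cases hab : a ∈ G k ∧ b ∈ G k
  · have h : ∀ c : Fin n,
        (if a ∈ G k ∧ c ∈ G k then ((G k).card : ℝ)⁻¹ else 0) *
          (if c ∈ G k ∧ b ∈ G k then ((G k).card : ℝ)⁻¹ else 0)
        = if c ∈ G k then ((G k).card : ℝ)⁻¹ * ((G k).card : ℝ)⁻¹ else 0 := by
      intro c
      by_cases hc : c ∈ G k <;> simp [hc, hab.1, hab.2]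
    rw [Finset.sum_congr rfl fun c _ => h c, sum_ind_card, if_pos hab]
    have hcard : ((G k).card : ℝ) ≠ 0 := by exact_mod_cast (hG.2 k).card_pos.ne'
    rw [← mul_assoc, mul_inv_cancel₀ hcard, one_mul]
  · have h : ∀ c : Fin n,
        (if a ∈ G k ∧ c ∈ G k then ((G k).card : ℝ)⁻¹ else 0) *
          (if c ∈ G k ∧ b ∈ G k then ((G k).card : ℝ)⁻¹ else 0) = 0 := by
      intro c
      by_cases h1 : a ∈ G k ∧ c ∈ G k
      · have h2 : ¬ (c ∈ G k ∧ b ∈ G k) := fun h2 => hab ⟨h1.1, h2.2⟩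
        simp [h2]
      · simp [h1]
    rw [if_neg hab]
    exact Finset.sum_eq_zero fun c _ => h c

lemma cm_mem_CK01 {n K : ℕ} {G : Fin K → Finset (Fin n)} (hG : IsPartition G) :
    charMatrix G ∈ CK01 n K :=
  ⟨cm_nonneg G, cm_isSymm G, cm_trace hG, cm_mulVec_one hG, cm_mul_self hG⟩

lemma mip_add_left {n : ℕ} (A B C : Matrix (Fin n) (Fin n) ℝ) :
    mip (A + B) C = mip A C + mip B C := by
  simp [mip, Matrix.add_apply, add_mul, Finset.sum_add_distrib]

lemma mip_smul_left {n : ℕ} (c : ℝ) (A B : Matrix (Fin n) (Fin n) ℝ) :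
    mip (c • A) B = c * mip A B := by
  simp [mip, Matrix.smul_apply, smul_eq_mul, Finset.mul_sum, mul_assoc]

lemma mip_diagonal {n : ℕ} (f : Fin n → ℝ) (B : Matrix (Fin n) (Fin n) ℝ) :
    mip (Matrix.diagonal f) B = ∑ a, f a * B a a := by
  unfold mip
  refine Finset.sum_congr rfl fun a _ => ?_
  rw [Finset.sum_eq_single a]
  · simp [Matrix.diagonal_apply_eq]
  · intro b _ hba
    simp [Matrix.diagonal_apply_ne f (Ne.symm hba)]
  · simp

lemma mip_charMatrix {n K L : ℕ} (G : Fin K → Finset (Fin n)) (H : Fin L → Finset (Fin n)) :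
    mip (charMatrix G) (charMatrix H) =
      ∑ k, ∑ l, ((G k ∩ H l).card : ℝ)^2 / (((G k).card : ℝ) * ((H l).card : ℝ)) := by
  unfold mip charMatrix
  have step1 : ∀ a b : Fin n,
      (∑ k, if a ∈ G k ∧ b ∈ G k then ((G k).card : ℝ)⁻¹ else 0) *
        (∑ l, if a ∈ H l ∧ b ∈ H l then ((H l).card : ℝ)⁻¹ else 0)
      = ∑ k, ∑ l, (if a ∈ G k ∩ H l then ((G k).card : ℝ)⁻¹ else 0) *
          (if b ∈ G k ∩ H l then ((H l).card : ℝ)⁻¹ else 0) := by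
    intro a b
    rw [Finset.sum_mul_sum]
    refine Finset.sum_congr rfl fun k _ => Finset.sum_congr rfl fun l _ => ?_
    simp only [Finset.mem_inter]
    split_ifs <;> first | rfl | (exfalso; tauto) | ring
  calc ∑ a, ∑ b, (∑ k, if a ∈ G k ∧ b ∈ G k then ((G k).card : ℝ)⁻¹ else 0) *
        (∑ l, if a ∈ H l ∧ b ∈ H l then ((H l).card : ℝ)⁻¹ else 0)
      = ∑ a, ∑ b, ∑ k, ∑ l, (if a ∈ G k ∩ H l then ((G k).card : ℝ)⁻¹ else 0) *
          (if b ∈ G k ∩ H l then ((H l).card : ℝ)⁻¹ else 0) :=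
        Finset.sum_congr rfl fun a _ => Finset.sum_congr rfl fun b _ => step1 a b
    _ = ∑ a : Fin n, ∑ k, ∑ b : Fin n, ∑ l,
          (if a ∈ G k ∩ H l then ((G k).card : ℝ)⁻¹ else 0) *
          (if b ∈ G k ∩ H l then ((H l).card : ℝ)⁻¹ else 0) :=
        Finset.sum_congr rfl fun a _ => Finset.sum_comm
    _ = ∑ a : Fin n, ∑ k, ∑ l, ∑ b : Fin n,
          (if a ∈ G k ∩ H l then ((G k).card : ℝ)⁻¹ else 0) *
          (if b ∈ G k ∩ H l then ((H l).card : ℝ)⁻¹ else 0) :=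
        Finset.sum_congr rfl fun a _ => Finset.sum_congr rfl fun k _ => Finset.sum_comm
    _ = ∑ k, ∑ a : Fin n, ∑ l, ∑ b : Fin n,
          (if a ∈ G k ∩ H l then ((G k).card : ℝ)⁻¹ else 0) *
          (if b ∈ G k ∩ H l then ((H l).card : ℝ)⁻¹ else 0) := Finset.sum_comm
    _ = ∑ k, ∑ l, ∑ a : Fin n, ∑ b : Fin n,
          (if a ∈ G k ∩ H l then ((G k).card : ℝ)⁻¹ else 0) *
          (if b ∈ G k ∩ H l then ((H l).card : ℝ)⁻¹ else 0) :=
        Finset.sum_congr rfl fun k _ => Finset.sum_comm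
    _ = ∑ k, ∑ l, ((G k ∩ H l).card : ℝ)^2 / (((G k).card : ℝ) * ((H l).card : ℝ)) := by
        refine Finset.sum_congr rfl fun k _ => Finset.sum_congr rfl fun l _ => ?_
        rw [← Finset.sum_mul_sum, sum_ind_card, sum_ind_card, div_eq_mul_inv, mul_inv]
        ring

lemma nat_div_eq_iff {m : ℕ} (hm : 0 < m) (i k : ℕ) :
    i / m = k ↔ k * m ≤ i ∧ i < (k + 1) * m := by
  constructor
  · rintro rfl
    refine ⟨Nat.div_mul_le_self i m, ?_⟩
    rw [add_mul, one_mul]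
    have h1 := Nat.div_add_mod i m
    have h2 := Nat.mod_lt i hm
    calc i = m * (i / m) + i % m := h1.symm
      _ < m * (i / m) + m := by omega
      _ = i / m * m + m := by ring
  · rintro ⟨h1, h2⟩
    exact Nat.div_eq_of_lt_le h1 h2

lemma card_univ_filter {n : ℕ} (lo hi : ℕ) (hhi : hi ≤ n) (p : Fin n → Prop)
    [DecidablePred p] (h : ∀ a : Fin n, p a ↔ lo ≤ a.val ∧ a.val < hi) :
    (Finset.univ.filter p).card = hi - lo := by
  have e1 : Finset.univ.filter p
      = Finset.univ.filter (fun a : Fin n => lo ≤ a.val ∧ a.val < hi) := by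
    ext a
    simp [h]
  rw [e1, Finset.card_filter,
    Fin.sum_univ_eq_sum_range (fun i => if lo ≤ i ∧ i < hi then 1 else 0),
    ← Finset.card_filter]
  have e2 : (Finset.range n).filter (fun i => lo ≤ i ∧ i < hi) = Finset.Ico lo hi := by
    ext i
    simp only [Finset.mem_filter, Finset.mem_range, Finset.mem_Ico]
    omega
  rw [e2, Nat.card_Ico]

lemma card_set_eq {n : ℕ} (lo hi : ℕ) (hhi : hi ≤ n) (s : Finset (Fin n))
    (h : ∀ a : Fin n, a ∈ s ↔ lo ≤ a.val ∧ a.val < hi) : s.card = hi - lo := by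
  have e : s = Finset.univ.filter (fun a => a ∈ s) := by
    ext a
    simp
  rw [e]
  exact card_univ_filter lo hi hhi _ h

lemma card_inter_eq {n : ℕ} (lo hi : ℕ) (hhi : hi ≤ n) (s t : Finset (Fin n))
    (h : ∀ a : Fin n, (a ∈ s ∧ a ∈ t) ↔ lo ≤ a.val ∧ a.val < hi) :
    (s ∩ t).card = hi - lo := by
  have e : s ∩ t = Finset.univ.filter (fun a => a ∈ s ∧ a ∈ t) := by
    ext a
    simp
  rw [e]
  exact card_univ_filter lo hi hhi _ h

lemma mem_blockPartition {m : ℕ} (k : Fin 3) (a : Fin (3 * m)) :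
    a ∈ blockPartition m k ↔ a.val / m = k.val := by
  simp [blockPartition]

lemma mem_splitPartition {m : ℕ} (k : Fin 3) (a : Fin (3 * m)) :
    a ∈ splitPartition m k ↔
      (k = 0 ∧ a.val < m / 2) ∨ (k = 1 ∧ m / 2 ≤ a.val ∧ a.val < m) ∨
        (k = 2 ∧ m ≤ a.val) := by
  simp [splitPartition]

lemma sum_ite_val (m : ℕ) (X Y : ℝ) :
    ∑ a : Fin (3 * m), (if a.val < m then X else Y) = m * X + (2 * m : ℕ) * Y := by
  rw [Fin.sum_univ_eq_sum_range (fun i => if i < m then X else Y), Finset.sum_ite]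
  have h1 : (Finset.range (3 * m)).filter (fun i => i < m) = Finset.range m := by
    ext i
    simp only [Finset.mem_filter, Finset.mem_range]
    omega
  have h2 : (Finset.range (3 * m)).filter (fun i => ¬ i < m) = Finset.Ico m (3 * m) := by
    ext i
    simp only [Finset.mem_filter, Finset.mem_range, Finset.mem_Ico]
    omega
  rw [h1, h2, Finset.sum_const, Finset.sum_const, Finset.card_range, Nat.card_Ico,
    nsmul_eq_mul, nsmul_eq_mul]
  have h3 : (3 * m - m : ℕ) = 2 * m := by omega
  rw [h3]

end CexAux

/-- **Proposition 3.2 (counterexample).** Even with perfectly discriminated population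
clusters, a heteroscedastic noise configuration makes `B*` suboptimal for the
(relaxed) K-means objective on the population version. -/
theorem counterexample_heteroscedastic (m : ℕ) (Δ γp γm : ℝ)
    (hm : 2 ≤ m) (hme : Even m) (hΔ : 0 < Δ) (hγm : 0 < γm) (hγ : γm < γp)
    (hcond : (m : ℝ) * Δ ^ 2 < 2 * (γp - γm)) :
    varSeminorm (Matrix.diagonal fun a : Fin (3 * m) =>
        if a.val < m then γp else γm) = γp - γm ∧
    charMatrix (splitPartition m) ∈ CK01 (3 * m) 3 ∧
    mip (cexObjective m Δ γp γm) (charMatrix (blockPartition m)) <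
      mip (cexObjective m Δ γp γm) (charMatrix (splitPartition m)) ∧
    ¬ (∀ B ∈ CK01 (3 * m) 3, mip (cexObjective m Δ γp γm) B ≤
        mip (cexObjective m Δ γp γm) (charMatrix (blockPartition m))) ∧
    ¬ (∀ B ∈ CKset (3 * m) 3, mip (cexObjective m Δ γp γm) B ≤
        mip (cexObjective m Δ γp γm) (charMatrix (blockPartition m))) := by
  have hm0 : 0 < m := by omega
  have hn0 : 0 < 3 * m := by omega
  have hme' : m % 2 = 0 := Nat.even_iff.mp hme
  have hm' : (m : ℝ) ≠ 0 := Nat.cast_ne_zero.mpr hm0.ne'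
  have hv0 : ((0 : Fin 3) : ℕ) = 0 := rfl
  have hv1 : ((1 : Fin 3) : ℕ) = 1 := rfl
  have hv2 : ((2 : Fin 3) : ℕ) = 2 := rfl
  have hne01 : (0 : Fin 3) ≠ 1 := by decide
  have hne02 : (0 : Fin 3) ≠ 2 := by decide
  have hne10 : (1 : Fin 3) ≠ 0 := by decide
  have hne12 : (1 : Fin 3) ≠ 2 := by decide
  have hne20 : (2 : Fin 3) ≠ 0 := by decide
  have hne21 : (2 : Fin 3) ≠ 1 := by decide
  have mG0 : ∀ a : Fin (3 * m), a ∈ blockPartition m 0 ↔ a.val < m := by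
    intro a
    have ha := a.isLt
    rw [mem_blockPartition, hv0, nat_div_eq_iff hm0]
    omega
  have mG1 : ∀ a : Fin (3 * m), a ∈ blockPartition m 1 ↔ m ≤ a.val ∧ a.val < 2 * m := by
    intro a
    have ha := a.isLt
    rw [mem_blockPartition, hv1, nat_div_eq_iff hm0]
    omega
  have mG2 : ∀ a : Fin (3 * m), a ∈ blockPartition m 2 ↔ 2 * m ≤ a.val := by
    intro a
    have ha := a.isLt
    rw [mem_blockPartition, hv2, nat_div_eq_iff hm0]
    omega
  have mH0 : ∀ a : Fin (3 * m), a ∈ splitPartition m 0 ↔ a.val < m / 2 := by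
    intro a
    rw [mem_splitPartition]
    simp [hne01, hne02]
  have mH1 : ∀ a : Fin (3 * m), a ∈ splitPartition m 1 ↔ m / 2 ≤ a.val ∧ a.val < m := by
    intro a
    rw [mem_splitPartition]
    simp [hne10, hne12]
  have mH2 : ∀ a : Fin (3 * m), a ∈ splitPartition m 2 ↔ m ≤ a.val := by
    intro a
    rw [mem_splitPartition]
    simp [hne20, hne21]
  have hGpart : IsPartition (blockPartition m) := by
    constructor
    · intro a
      have h3 : a.val / m < 3 := Nat.div_lt_of_lt_mul (by omega)
      refine ⟨⟨a.val / m, h3⟩, (mem_blockPartition _ a).mpr rfl, ?_⟩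
      intro k hk
      rw [mem_blockPartition] at hk
      exact Fin.val_injective hk.symm
    · intro k
      have hk2 : k.val ≤ 2 := by have := k.isLt; omega
      have hlt : k.val * m < 3 * m :=
        lt_of_le_of_lt (Nat.mul_le_mul_right m hk2) (by omega)
      exact ⟨⟨k.val * m, hlt⟩, (mem_blockPartition k _).mpr (Nat.mul_div_cancel _ hm0)⟩
  have hHpart : IsPartition (splitPartition m) := by
    constructor
    · intro a
      rcases Nat.lt_or_ge a.val (m / 2) with h | h
      · refine ⟨0, (mH0 a).mpr h, ?_⟩
        intro k hk
        rcases (mem_splitPartition k a).mp hk with ⟨rfl, h'⟩ | ⟨rfl, h'⟩ | ⟨rfl, h'⟩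
        · rfl
        · exact absurd h'.1 (by omega)
        · exact absurd h' (by omega)
      rcases Nat.lt_or_ge a.val m with h2 | h2
      · refine ⟨1, (mH1 a).mpr ⟨h, h2⟩, ?_⟩
        intro k hk
        rcases (mem_splitPartition k a).mp hk with ⟨rfl, h'⟩ | ⟨rfl, h'⟩ | ⟨rfl, h'⟩
        · exact absurd h' (by omega)
        · rfl
        · exact absurd h' (by omega)
      · refine ⟨2, (mH2 a).mpr h2, ?_⟩
        intro k hk
        rcases (mem_splitPartition k a).mp hk with ⟨rfl, h'⟩ | ⟨rfl, h'⟩ | ⟨rfl, h'⟩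
        · exact absurd h' (by omega)
        · exact absurd h'.2 (by omega)
        · rfl
    · intro k
      fin_cases k
      · exact ⟨⟨0, hn0⟩, (mH0 ⟨0, hn0⟩).mpr (show 0 < m / 2 by omega)⟩
      · exact ⟨⟨m / 2, by omega⟩, (mH1 ⟨m / 2, by omega⟩).mpr
          (show m / 2 ≤ m / 2 ∧ m / 2 < m by omega)⟩
      · exact ⟨⟨m, by omega⟩, (mH2 ⟨m, by omega⟩).mpr (show m ≤ m from le_rfl)⟩
  have cG : ∀ k : Fin 3, (blockPartition m k).card = m := by
    intro k
    have hk2 : k.val ≤ 2 := by have := k.isLt; omega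
    have hhi : k.val * m + m ≤ 3 * m := by
      calc k.val * m + m ≤ 2 * m + m := Nat.add_le_add_right (Nat.mul_le_mul_right m hk2) m
        _ = 3 * m := by ring
    have h := card_set_eq (k.val * m) (k.val * m + m) hhi (blockPartition m k) (fun a => by
      rw [mem_blockPartition, nat_div_eq_iff hm0, add_mul, one_mul])
    rwa [Nat.add_sub_cancel_left] at h
  have cH0 : (splitPartition m 0).card = m / 2 := by
    have h := card_set_eq 0 (m / 2) (by omega) (splitPartition m 0)
      (fun a => by rw [mH0]; omega)
    omega
  have cH1 : (splitPartition m 1).card = m / 2 := by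
    have h := card_set_eq (m / 2) m (by omega) (splitPartition m 1)
      (fun a => by rw [mH1])
    omega
  have cH2 : (splitPartition m 2).card = 2 * m := by
    have h := card_set_eq m (3 * m) (by omega) (splitPartition m 2)
      (fun a => by have := a.isLt; rw [mH2]; omega)
    omega
  have hoffG : ∀ k l : Fin 3, k ≠ l → blockPartition m k ∩ blockPartition m l = ∅ := by
    intro k l hkl
    ext c
    simp only [Finset.mem_inter, Finset.notMem_empty, iff_false, not_and]
    intro h1 h2
    exact hkl (partition_unique hGpart h1 h2)
  have cI00 : (blockPartition m 0 ∩ splitPartition m 0).card = m / 2 := by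
    have h := card_inter_eq 0 (m / 2) (by omega) (blockPartition m 0) (splitPartition m 0)
      (fun a => by rw [mG0, mH0]; omega)
    omega
  have cI01 : (blockPartition m 0 ∩ splitPartition m 1).card = m / 2 := by
    have h := card_inter_eq (m / 2) m (by omega) (blockPartition m 0) (splitPartition m 1)
      (fun a => by rw [mG0, mH1]; omega)
    omega
  have cI02 : (blockPartition m 0 ∩ splitPartition m 2).card = 0 := by
    have h := card_inter_eq 0 0 (by omega) (blockPartition m 0) (splitPartition m 2)
      (fun a => by rw [mG0, mH2]; omega)
    omega
  have cI10 : (blockPartition m 1 ∩ splitPartition m 0).card = 0 := by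
    have h := card_inter_eq 0 0 (by omega) (blockPartition m 1) (splitPartition m 0)
      (fun a => by rw [mG1, mH0]; omega)
    omega
  have cI11 : (blockPartition m 1 ∩ splitPartition m 1).card = 0 := by
    have h := card_inter_eq 0 0 (by omega) (blockPartition m 1) (splitPartition m 1)
      (fun a => by rw [mG1, mH1]; omega)
    omega
  have cI12 : (blockPartition m 1 ∩ splitPartition m 2).card = m := by
    have h := card_inter_eq m (2 * m) (by omega) (blockPartition m 1) (splitPartition m 2)
      (fun a => by rw [mG1, mH2]; omega)
    omega
  have cI20 : (blockPartition m 2 ∩ splitPartition m 0).card = 0 := by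
    have h := card_inter_eq 0 0 (by omega) (blockPartition m 2) (splitPartition m 0)
      (fun a => by rw [mG2, mH0]; omega)
    omega
  have cI21 : (blockPartition m 2 ∩ splitPartition m 1).card = 0 := by
    have h := card_inter_eq 0 0 (by omega) (blockPartition m 2) (splitPartition m 1)
      (fun a => by rw [mG2, mH1]; omega)
    omega
  have cI22 : (blockPartition m 2 ∩ splitPartition m 2).card = m := by
    have h := card_inter_eq (2 * m) (3 * m) (by omega) (blockPartition m 2) (splitPartition m 2)
      (fun a => by have := a.isLt; rw [mG2, mH2]; omega)
    omega
  have hBdiag : ∀ a : Fin (3 * m), charMatrix (blockPartition m) a a = (m : ℝ)⁻¹ := by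
    intro a
    have ha := a.isLt
    unfold charMatrix
    rw [Fin.sum_univ_three]
    simp only [and_self, mG0, mG1, mG2, cG]
    rcases (show a.val < m ∨ (m ≤ a.val ∧ a.val < 2 * m) ∨ 2 * m ≤ a.val by omega)
      with h | h | h
    · simp [h, (show ¬ (m ≤ a.val ∧ a.val < 2 * m) by omega), (show ¬ 2 * m ≤ a.val by omega)]
    · simp [h, (show ¬ a.val < m by omega), (show ¬ 2 * m ≤ a.val by omega)]
    · simp [h, (show ¬ a.val < m by omega), (show ¬ (m ≤ a.val ∧ a.val < 2 * m) by omega)]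
  have hB1diag : ∀ a : Fin (3 * m), charMatrix (splitPartition m) a a
      = if a.val < m then ((m / 2 : ℕ) : ℝ)⁻¹ else ((2 * m : ℕ) : ℝ)⁻¹ := by
    intro a
    unfold charMatrix
    rw [Fin.sum_univ_three]
    simp only [and_self, mH0, mH1, mH2, cH0, cH1, cH2]
    rcases (show a.val < m / 2 ∨ (m / 2 ≤ a.val ∧ a.val < m) ∨ m ≤ a.val by omega)
      with h | h | h
    · simp [h, (show ¬ (m / 2 ≤ a.val ∧ a.val < m) by omega), (show ¬ m ≤ a.val by omega),
        (show a.val < m by omega)]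
    · simp [h, (show ¬ a.val < m / 2 by omega), (show ¬ m ≤ a.val by omega), h.2]
    · simp [h, (show ¬ a.val < m / 2 by omega), (show ¬ a.val < m by omega)]
  have hSstar : ∑ a : Fin (3 * m),
      (if a.val < m then γp else γm) * charMatrix (blockPartition m) a a
      = γp + 2 * γm := by
    have e : ∀ a : Fin (3 * m),
        (if a.val < m then γp else γm) * charMatrix (blockPartition m) a a
        = if a.val < m then γp * (m : ℝ)⁻¹ else γm * (m : ℝ)⁻¹ := by
      intro a
      rw [hBdiag a]
      by_cases h : a.val < m <;> simp [h]
    rw [Finset.sum_congr rfl fun a _ => e a, sum_ite_val]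
    push_cast
    field_simp
  have hc2 : ((m / 2 : ℕ) : ℝ) = (m : ℝ) / 2 := by
    have h2 : (m / 2 * 2 : ℕ) = m := by omega
    have h3 : ((m / 2 : ℕ) : ℝ) * 2 = (m : ℝ) := by exact_mod_cast h2
    linarith
  have hcne : ((m / 2 : ℕ) : ℝ) ≠ 0 := Nat.cast_ne_zero.mpr (by omega)
  have hS1 : ∑ a : Fin (3 * m),
      (if a.val < m then γp else γm) * charMatrix (splitPartition m) a a
      = 2 * γp + γm := by
    have e : ∀ a : Fin (3 * m),
        (if a.val < m then γp else γm) * charMatrix (splitPartition m) a a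
        = if a.val < m then γp * ((m / 2 : ℕ) : ℝ)⁻¹ else γm * ((2 * m : ℕ) : ℝ)⁻¹ := by
      intro a
      rw [hB1diag a]
      by_cases h : a.val < m <;> simp [h]
    rw [Finset.sum_congr rfl fun a _ => e a, sum_ite_val, hc2]
    push_cast
    field_simp
  have hmipBB : mip (charMatrix (blockPartition m)) (charMatrix (blockPartition m)) = 3 := by
    rw [mip_charMatrix]
    simp only [Fin.sum_univ_three, Finset.inter_self,
      hoffG 0 1 (by decide), hoffG 0 2 (by decide), hoffG 1 0 (by decide),
      hoffG 1 2 (by decide), hoffG 2 0 (by decide), hoffG 2 1 (by decide),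
      Finset.card_empty, Nat.cast_zero, cG]
    field_simp
    ring
  have hmipBB1 : mip (charMatrix (blockPartition m)) (charMatrix (splitPartition m)) = 2 := by
    rw [mip_charMatrix]
    simp only [Fin.sum_univ_three, cI00, cI01, cI02, cI10, cI11, cI12, cI20, cI21, cI22,
      cG, cH0, cH1, cH2, Nat.cast_zero]
    rw [hc2]
    push_cast
    field_simp
    ring
  have hobjB : mip (cexObjective m Δ γp γm) (charMatrix (blockPartition m))
      = (Δ ^ 2 * m / 2) * 3 + (γp + 2 * γm) := by
    unfold cexObjective
    rw [mip_add_left, mip_smul_left, hmipBB, mip_diagonal, hSstar]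
  have hobjB1 : mip (cexObjective m Δ γp γm) (charMatrix (splitPartition m))
      = (Δ ^ 2 * m / 2) * 2 + (2 * γp + γm) := by
    unfold cexObjective
    rw [mip_add_left, mip_smul_left, hmipBB1, mip_diagonal, hS1]
  have hlt : mip (cexObjective m Δ γp γm) (charMatrix (blockPartition m)) <
      mip (cexObjective m Δ γp γm) (charMatrix (splitPartition m)) := by
    rw [hobjB, hobjB1]
    nlinarith [hcond]
  have hmem1 : charMatrix (splitPartition m) ∈ CK01 (3 * m) 3 := cm_mem_CK01 hHpart
  have hpsd : (charMatrix (splitPartition m)).PosSemidef := by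
    have hsym := cm_isSymm (splitPartition m)
    have hmul := cm_mul_self hHpart
    have hct : (charMatrix (splitPartition m))ᴴ = charMatrix (splitPartition m) := by
      ext a b
      simp only [Matrix.conjTranspose_apply, star_trivial]
      exact congrFun (congrFun hsym a) b
    have heq : charMatrix (splitPartition m)
        = (charMatrix (splitPartition m))ᴴ * charMatrix (splitPartition m) := by
      rw [hct]
      exact hmul.symm
    rw [heq]
    exact Matrix.posSemidef_conjTranspose_mul_self _
  haveI hNE : Nonempty (Fin (3 * m)) := ⟨⟨0, hn0⟩⟩
  refine ⟨?_, hmem1, hlt, ?_, ?_⟩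
  · unfold varSeminorm
    simp only [Matrix.diagonal_apply_eq]
    have hsup : (⨆ i : Fin (3 * m), (if (i : Fin (3 * m)).val < m then γp else γm)) = γp := by
      apply le_antisymm
      · apply ciSup_le
        intro i
        by_cases h : (i : Fin (3 * m)).val < m
        · simp [h]
        · simp [h, hγ.le]
      · calc γp = (if ((⟨0, hn0⟩ : Fin (3 * m)) : Fin (3 * m)).val < m then γp else γm) := by
              simp [hm0]
          _ ≤ ⨆ i : Fin (3 * m), (if (i : Fin (3 * m)).val < m then γp else γm) :=
            le_ciSup (f := fun i : Fin (3 * m) => if (i : Fin (3 * m)).val < m then γp else γm)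
              (Set.Finite.bddAbove (Set.finite_range _)) ⟨0, hn0⟩
    have hinf : (⨅ i : Fin (3 * m), (if (i : Fin (3 * m)).val < m then γp else γm)) = γm := by
      apply le_antisymm
      · calc (⨅ i : Fin (3 * m), (if (i : Fin (3 * m)).val < m then γp else γm))
            ≤ (if ((⟨m, by omega⟩ : Fin (3 * m)) : Fin (3 * m)).val < m then γp else γm) :=
              ciInf_le (f := fun i : Fin (3 * m) => if (i : Fin (3 * m)).val < m then γp else γm)
                (Set.Finite.bddBelow (Set.finite_range _)) ⟨m, by omega⟩
          _ = γm := by simp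
      · apply le_ciInf
        intro i
        by_cases h : (i : Fin (3 * m)).val < m
        · simp [h, hγ.le]
        · simp [h]
    rw [hsup, hinf]
  · intro hall
    exact absurd (hall _ hmem1) (not_le.mpr hlt)
  · intro hall
    refine absurd (hall _ ?_) (not_le.mpr hlt)
    obtain ⟨h1, h2, h3, h4, _⟩ := hmem1
    exact ⟨h1, h2, h3, h4, hpsd⟩


end Clustering
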